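/- For every n ≥ 2, in the braid group B_{n+1} the following two identities hold: s_n^{-1} (s_{n-1}^{-1} s_{n-2}^{-1} ⋯ s_2^{-1} s_1 s_2^{-1} ⋯ s_{n-1}^{-1}) s_n = (s_{n-1} s_{n-2} ⋯ s_1) (s_n^{-1} s_{n-1}^{-1} ⋯ s_3^{-1} s_2 s_3^{-1} ⋯ s_n^{-1}) (s_{n-1} s_{n-2} ⋯ s_1)^{-1}, and s_n (s_{n-1} s_{n-2} ⋯ s_2 s_1^{-1} s_2 ⋯ s_{n-1}) s_n^{-1} = (s_{n-1}^{-1} s_{n-2}^{-1} ⋯ s_1^{-1}) (s_n s_{n-1} ⋯ s_3 s_2^{-1} s_3 ⋯ s_n) (s_{n-1}^{-1} s_{n-2}^{-1} ⋯ s_1^{-1})^{-1}. -/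
import Mathlib


noncomputable section
open scoped Classical

namespace Cubic

/-- The braid relations on `m` generators. -/
def braidRels (m : ℕ) : Set (FreeGroup (Fin m)) :=
  { r | (∃ i j : Fin m, (i : ℕ) + 1 = (j : ℕ) ∧
          r = FreeGroup.of i * FreeGroup.of j * FreeGroup.of i *
              (FreeGroup.of j * FreeGroup.of i * FreeGroup.of j)⁻¹) ∨
        (∃ i j : Fin m, (i : ℕ) + 2 ≤ (j : ℕ) ∧
          r = FreeGroup.of i * FreeGroup.of j * (FreeGroup.of j * FreeGroup.of i)⁻¹) }

/-- The braid group with `m` Artin generators, i.e. the braid group on `m+1` strands. -/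
def BraidGroup (m : ℕ) : Type := PresentedGroup (braidRels m)

instance (m : ℕ) : Group (BraidGroup m) :=
  inferInstanceAs (Group (PresentedGroup (braidRels m)))

/-- The Artin generator with index `i`; this is `s_{i+1}` in the usual numbering. -/
def σ {m : ℕ} (i : Fin m) : BraidGroup m := PresentedGroup.of i

/-- The ordered product `f lo * f (lo+1) * ⋯ * f (lo+len-1)`. -/
def ascProd {G : Type} [Group G] (f : ℕ → G) (lo len : ℕ) : G :=
  ((List.range' lo len).map f).prod

/-- The ordered product `f (lo+len-1) * ⋯ * f (lo+1) * f lo`. -/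
def descProd {G : Type} [Group G] (f : ℕ → G) (lo len : ℕ) : G :=
  ((List.range' lo len).reverse.map f).prod

variable {G : Type} [Group G]

lemma ascProd_zero (f : ℕ → G) (lo : ℕ) : ascProd f lo 0 = 1 := rfl

lemma descProd_zero (f : ℕ → G) (lo : ℕ) : descProd f lo 0 = 1 := rfl

lemma ascProd_succ (f : ℕ → G) (lo len : ℕ) :
    ascProd f lo (len + 1) = f lo * ascProd f (lo + 1) len := by
  simp [ascProd, List.range'_succ]

lemma descProd_succ (f : ℕ → G) (lo len : ℕ) :
    descProd f lo (len + 1) = descProd f (lo + 1) len * f lo := by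
  simp [descProd, List.range'_succ]

lemma ascProd_add (f : ℕ → G) (lo m k : ℕ) :
    ascProd f lo (m + k) = ascProd f lo m * ascProd f (lo + m) k := by
  induction m generalizing lo with
  | zero => simp [ascProd_zero]
  | succ m ih =>
      rw [show m + 1 + k = (m + k) + 1 by omega, ascProd_succ, ih, ascProd_succ]
      rw [show lo + 1 + m = lo + (m + 1) by omega, mul_assoc]

lemma descProd_add (f : ℕ → G) (lo m k : ℕ) :
    descProd f lo (m + k) = descProd f (lo + m) k * descProd f lo m := by
  induction m generalizing lo with
  | zero => simp [descProd_zero]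
  | succ m ih =>
      rw [show m + 1 + k = (m + k) + 1 by omega, descProd_succ, ih, descProd_succ]
      rw [show lo + 1 + m = lo + (m + 1) by omega, mul_assoc]

lemma ascProd_one (f : ℕ → G) (lo : ℕ) : ascProd f lo 1 = f lo := by
  simp [ascProd, List.range']

lemma descProd_one (f : ℕ → G) (lo : ℕ) : descProd f lo 1 = f lo := by
  simp [descProd, List.range']

lemma ascProd_succ_last (f : ℕ → G) (lo len : ℕ) :
    ascProd f lo (len + 1) = ascProd f lo len * f (lo + len) := by
  rw [ascProd_add, ascProd_one]

lemma descProd_succ_last (f : ℕ → G) (lo len : ℕ) :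
    descProd f lo (len + 1) = f (lo + len) * descProd f lo len := by
  rw [descProd_add, descProd_one]

lemma descProd_inv (f : ℕ → G) (lo len : ℕ) :
    descProd (fun k => (f k)⁻¹) lo len = (ascProd f lo len)⁻¹ := by
  induction len generalizing lo with
  | zero => simp [ascProd_zero, descProd_zero]
  | succ m ih => rw [descProd_succ, ascProd_succ, ih, mul_inv_rev]

lemma ascProd_inv (f : ℕ → G) (lo len : ℕ) :
    ascProd (fun k => (f k)⁻¹) lo len = (descProd f lo len)⁻¹ := by
  induction len generalizing lo with
  | zero => simp [ascProd_zero, descProd_zero]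
  | succ m ih => rw [descProd_succ, ascProd_succ, ih, mul_inv_rev]

lemma ascProd_comm (f : ℕ → G) (g : G) (lo len : ℕ)
    (h : ∀ j, lo ≤ j → j < lo + len → g * f j = f j * g) :
    g * ascProd f lo len = ascProd f lo len * g := by
  induction len generalizing lo with
  | zero => simp [ascProd_zero]
  | succ m ih =>
      rw [ascProd_succ, ← mul_assoc, h lo le_rfl (by omega), mul_assoc,
        ih (lo + 1) (fun j h1 h2 => h j (by omega) (by omega)), mul_assoc]

lemma descProd_comm (f : ℕ → G) (g : G) (lo len : ℕ)
    (h : ∀ j, lo ≤ j → j < lo + len → g * f j = f j * g) :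
    g * descProd f lo len = descProd f lo len * g := by
  induction len generalizing lo with
  | zero => simp [descProd_zero]
  | succ m ih =>
      rw [descProd_succ, ← mul_assoc, ih (lo + 1) (fun j h1 h2 => h j (by omega) (by omega)),
        mul_assoc, h lo le_rfl (by omega), mul_assoc]

lemma conj_ascProd (f f' : ℕ → G) (c : G) (lo len : ℕ)
    (h : ∀ j, lo ≤ j → j < lo + len → c * f j * c⁻¹ = f' (j + 1)) :
    c * ascProd f lo len * c⁻¹ = ascProd f' (lo + 1) len := by
  induction len generalizing lo with
  | zero => simp [ascProd_zero]
  | succ m ih =>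
      rw [ascProd_succ, ascProd_succ]
      have : c * (f lo * ascProd f (lo + 1) m) * c⁻¹ =
          (c * f lo * c⁻¹) * (c * ascProd f (lo + 1) m * c⁻¹) := by group
      rw [this, h lo le_rfl (by omega), ih (lo + 1) (fun j h1 h2 => h j (by omega) (by omega))]

lemma conj_descProd (f f' : ℕ → G) (c : G) (lo len : ℕ)
    (h : ∀ j, lo ≤ j → j < lo + len → c * f j * c⁻¹ = f' (j + 1)) :
    c * descProd f lo len * c⁻¹ = descProd f' (lo + 1) len := by
  induction len generalizing lo with
  | zero => simp [descProd_zero]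
  | succ m ih =>
      rw [descProd_succ, descProd_succ]
      have : c * (descProd f (lo + 1) m * f lo) * c⁻¹ =
          (c * descProd f (lo + 1) m * c⁻¹) * (c * f lo * c⁻¹) := by group
      rw [this, h lo le_rfl (by omega), ih (lo + 1) (fun j h1 h2 => h j (by omega) (by omega))]

section Shift

variable (t : ℕ → G) (n : ℕ)
variable (hbraid : ∀ i, 1 ≤ i → i + 1 ≤ n → t i * t (i + 1) * t i = t (i + 1) * t i * t (i + 1))
variable (hcomm : ∀ i j, 1 ≤ i → i + 2 ≤ j → j ≤ n → t i * t j = t j * t i)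

include hbraid hcomm in
lemma shift_up : ∀ i, 1 ≤ i → i + 1 ≤ n →
    ascProd t 1 n * t i * (ascProd t 1 n)⁻¹ = t (i + 1) := by
  intro i h1 h2
  obtain ⟨p, rfl⟩ : ∃ p, i = p + 1 := ⟨i - 1, by omega⟩
  obtain ⟨k, rfl⟩ : ∃ k, n = (p + 2) + k := ⟨n - (p + 2), by omega⟩
  set a := t (p + 1) with ha
  set b := t (p + 2) with hb
  set Q := ascProd t 1 p with hQ
  set R := ascProd t (1 + (p + 2)) k with hR
  have hbr : a * b * a = b * a * b := by
    have := hbraid (p + 1) (by omega) (by omega)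
    rw [show p + 1 + 1 = p + 2 from rfl] at this
    exact this
  have haR : a * R = R * a :=
    ascProd_comm t a (1 + (p + 2)) k (fun j hj1 hj2 => hcomm (p + 1) j (by omega) (by omega) (by omega))
  have hbQ : b * Q = Q * b :=
    ascProd_comm t b 1 p (fun j hj1 hj2 => (hcomm j (p + 2) (by omega) (by omega) (by omega)).symm)
  have hsplit : ascProd t 1 (p + 2 + k) = Q * (a * b) * R := by
    rw [ascProd_add, ascProd_add t 1 p 2, hQ, hR]
    rw [show (2 : ℕ) = 1 + 1 from rfl, ascProd_succ, ascProd_one]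
    rw [show (1 : ℕ) + p = p + 1 by omega, show p + 1 + 1 = p + 2 from rfl, ha, hb, mul_assoc]
  rw [hsplit]
  have e2 : R * a * R⁻¹ = a := by rw [← haR]; group
  calc Q * (a * b) * R * a * (Q * (a * b) * R)⁻¹
      = Q * (a * b) * (R * a * R⁻¹) * b⁻¹ * a⁻¹ * Q⁻¹ := by group
    _ = Q * (a * b * a) * b⁻¹ * a⁻¹ * Q⁻¹ := by rw [e2]; group
    _ = Q * (b * a * b) * b⁻¹ * a⁻¹ * Q⁻¹ := by rw [hbr]
    _ = Q * b * Q⁻¹ := by group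
    _ = b := by rw [← hbQ]; group

include hbraid hcomm in
lemma shift_down : ∀ i, 1 ≤ i → i + 1 ≤ n →
    (descProd t 1 n)⁻¹ * t i * descProd t 1 n = t (i + 1) := by
  intro i h1 h2
  obtain ⟨p, rfl⟩ : ∃ p, i = p + 1 := ⟨i - 1, by omega⟩
  obtain ⟨k, rfl⟩ : ∃ k, n = (p + 2) + k := ⟨n - (p + 2), by omega⟩
  set a := t (p + 1) with ha
  set b := t (p + 2) with hb
  set Q := descProd t 1 p with hQ
  set L := descProd t (1 + (p + 2)) k with hL
  have hbr : a * b * a = b * a * b := by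
    have := hbraid (p + 1) (by omega) (by omega)
    rw [show p + 1 + 1 = p + 2 from rfl] at this
    exact this
  have haL : a * L = L * a :=
    descProd_comm t a (1 + (p + 2)) k (fun j hj1 hj2 => hcomm (p + 1) j (by omega) (by omega) (by omega))
  have hbQ : b * Q = Q * b :=
    descProd_comm t b 1 p (fun j hj1 hj2 => (hcomm j (p + 2) (by omega) (by omega) (by omega)).symm)
  have hsplit : descProd t 1 (p + 2 + k) = L * ((b * a) * Q) := by
    rw [descProd_add, descProd_add t 1 p 2, hQ, hL]
    rw [show (2 : ℕ) = 1 + 1 from rfl, descProd_succ, descProd_one]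
    rw [show (1 : ℕ) + p = p + 1 by omega, show p + 1 + 1 = p + 2 from rfl, ha, hb, mul_assoc]
  rw [hsplit]
  have e2 : L⁻¹ * a * L = a := by rw [mul_assoc, haL]; group
  calc (L * (b * a * Q))⁻¹ * a * (L * (b * a * Q))
      = Q⁻¹ * (a⁻¹ * (b⁻¹ * ((L⁻¹ * a * L) * (b * (a * Q))))) := by group
    _ = Q⁻¹ * (a⁻¹ * (b⁻¹ * (a * (b * (a * Q))))) := by rw [e2]
    _ = Q⁻¹ * (a⁻¹ * b⁻¹ * (a * b * a)) * Q := by group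
    _ = Q⁻¹ * (a⁻¹ * b⁻¹ * (b * a * b)) * Q := by rw [hbr]
    _ = Q⁻¹ * (b * Q) := by group
    _ = b := by rw [hbQ]; group

end Shift

theorem statement13_aux {G : Type} [Group G] (t : ℕ → G) (n : ℕ) (hn : 2 ≤ n)
    (hbraid : ∀ i, 1 ≤ i → i + 1 ≤ n → t i * t (i + 1) * t i = t (i + 1) * t i * t (i + 1))
    (hcomm : ∀ i j, 1 ≤ i → i + 2 ≤ j → j ≤ n → t i * t j = t j * t i) :
    ((t n)⁻¹ * (descProd (fun k => (t k)⁻¹) 2 (n - 2) * t 1 *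
        ascProd (fun k => (t k)⁻¹) 2 (n - 2)) * t n =
      descProd t 1 (n - 1) *
        (descProd (fun k => (t k)⁻¹) 3 (n - 2) * t 2 * ascProd (fun k => (t k)⁻¹) 3 (n - 2)) *
        (descProd t 1 (n - 1))⁻¹) ∧
    (t n * (descProd t 2 (n - 2) * (t 1)⁻¹ * ascProd t 2 (n - 2)) * (t n)⁻¹ =
      descProd (fun k => (t k)⁻¹) 1 (n - 1) *
        (descProd t 3 (n - 2) * (t 2)⁻¹ * ascProd t 3 (n - 2)) *
        (descProd (fun k => (t k)⁻¹) 1 (n - 1))⁻¹) := by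
  obtain ⟨m, rfl⟩ : ∃ m, n = m + 2 := ⟨n - 2, by omega⟩
  have hdown := shift_down t (m + 2) hbraid hcomm
  have hup := shift_up t (m + 2) hbraid hcomm
  set δ' := descProd t 1 (m + 2) with hδ'def
  set δ := ascProd t 1 (m + 2) with hδdef
  constructor
  · -- identity 1
    have hdown_inv : ∀ j, 2 ≤ j → j < 2 + m →
        δ'⁻¹ * (fun k => (t k)⁻¹) j * δ'⁻¹⁻¹ = (fun k => (t k)⁻¹) (j + 1) := by
      intro j h1 h2
      have := hdown j (by omega) (by omega)
      simp only [inv_inv]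
      rw [show δ'⁻¹ * (t j)⁻¹ * δ' = (δ'⁻¹ * t j * δ')⁻¹ by group, this]
    have hD : δ'⁻¹ * descProd (fun k => (t k)⁻¹) 2 m * δ'⁻¹⁻¹ =
        descProd (fun k => (t k)⁻¹) 3 m := conj_descProd _ _ _ 2 m hdown_inv
    have hA : δ'⁻¹ * ascProd (fun k => (t k)⁻¹) 2 m * δ'⁻¹⁻¹ =
        ascProd (fun k => (t k)⁻¹) 3 m := conj_ascProd _ _ _ 2 m hdown_inv
    have h1 : δ'⁻¹ * t 1 * δ' = t 2 := hdown 1 (by omega) (by omega)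
    have hsplit : δ' = t (m + 2) * descProd t 1 (m + 1) := by
      rw [hδ'def, descProd_succ_last, show (1 : ℕ) + (m + 1) = m + 2 by omega]
    simp only [inv_inv] at hD hA
    simp only [show m + 2 - 2 = m from rfl, show m + 2 - 1 = m + 1 by omega]
    calc (t (m + 2))⁻¹ * (descProd (fun k => (t k)⁻¹) 2 m * t 1 *
            ascProd (fun k => (t k)⁻¹) 2 m) * t (m + 2)
        = descProd t 1 (m + 1) *
            ((δ'⁻¹ * descProd (fun k => (t k)⁻¹) 2 m * δ') * (δ'⁻¹ * t 1 * δ') *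
              (δ'⁻¹ * ascProd (fun k => (t k)⁻¹) 2 m * δ')) * (descProd t 1 (m + 1))⁻¹ := by
          rw [hsplit]; group
      _ = _ := by rw [hD, hA, h1]
  · -- identity 2
    have hup' : ∀ j, 2 ≤ j → j < 2 + m → δ * t j * δ⁻¹ = t (j + 1) := fun j h1 h2 =>
      hup j (by omega) (by omega)
    have hD : δ * descProd t 2 m * δ⁻¹ = descProd t 3 m := conj_descProd _ _ _ 2 m hup'
    have hA : δ * ascProd t 2 m * δ⁻¹ = ascProd t 3 m := conj_ascProd _ _ _ 2 m hup'
    have h1 : δ * (t 1)⁻¹ * δ⁻¹ = (t 2)⁻¹ := by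
      have := hup 1 (by omega) (by omega)
      rw [show δ * (t 1)⁻¹ * δ⁻¹ = (δ * t 1 * δ⁻¹)⁻¹ by group, this]
    have hsplit : δ = ascProd t 1 (m + 1) * t (m + 2) := by
      rw [hδdef, ascProd_succ_last, show (1 : ℕ) + (m + 1) = m + 2 by omega]
    simp only [show m + 2 - 2 = m from rfl, show m + 2 - 1 = m + 1 by omega,
      descProd_inv t 1 (m + 1)]
    calc t (m + 2) * (descProd t 2 m * (t 1)⁻¹ * ascProd t 2 m) * (t (m + 2))⁻¹
        = (ascProd t 1 (m + 1))⁻¹ *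
            ((δ * descProd t 2 m * δ⁻¹) * (δ * (t 1)⁻¹ * δ⁻¹) *
              (δ * ascProd t 2 m * δ⁻¹)) * ((ascProd t 1 (m + 1))⁻¹)⁻¹ := by
          rw [hsplit]; group
      _ = _ := by rw [hD, hA, h1]

lemma σ_braid {m : ℕ} (i j : Fin m) (h : (i : ℕ) + 1 = (j : ℕ)) :
    σ i * σ j * σ i = σ j * σ i * σ j := by
  have hr : FreeGroup.of i * FreeGroup.of j * FreeGroup.of i *
      (FreeGroup.of j * FreeGroup.of i * FreeGroup.of j)⁻¹ ∈ braidRels m :=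
    Or.inl ⟨i, j, h, rfl⟩
  have h1 : PresentedGroup.mk (braidRels m) (FreeGroup.of i * FreeGroup.of j * FreeGroup.of i *
      (FreeGroup.of j * FreeGroup.of i * FreeGroup.of j)⁻¹) = 1 :=
    (QuotientGroup.eq_one_iff _).mpr (Subgroup.subset_normalClosure hr)
  rw [map_mul, map_mul, map_inv, map_mul, map_mul] at h1
  exact mul_inv_eq_one.mp h1

lemma σ_comm {m : ℕ} (i j : Fin m) (h : (i : ℕ) + 2 ≤ (j : ℕ)) :
    σ i * σ j = σ j * σ i := by
  have hr : FreeGroup.of i * FreeGroup.of j * (FreeGroup.of j * FreeGroup.of i)⁻¹ ∈ braidRels m :=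
    Or.inr ⟨i, j, h, rfl⟩
  have h1 : PresentedGroup.mk (braidRels m) (FreeGroup.of i * FreeGroup.of j *
      (FreeGroup.of j * FreeGroup.of i)⁻¹) = 1 :=
    (QuotientGroup.eq_one_iff _).mpr (Subgroup.subset_normalClosure hr)
  rw [map_mul, map_inv, map_mul] at h1
  exact mul_inv_eq_one.mp h1

/-- For every `n ≥ 2`, in the braid group `B_{n+1}` (with Artin generators
`s_1, …, s_n`) the two identities obtained by iterated handle reduction hold:
`s_n⁻¹ (s_{n-1}⁻¹ ⋯ s_2⁻¹ s_1 s_2⁻¹ ⋯ s_{n-1}⁻¹) s_n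
  = (s_{n-1} ⋯ s_1) (s_n⁻¹ ⋯ s_3⁻¹ s_2 s_3⁻¹ ⋯ s_n⁻¹) (s_{n-1} ⋯ s_1)⁻¹` and
`s_n (s_{n-1} ⋯ s_2 s_1⁻¹ s_2 ⋯ s_{n-1}) s_n⁻¹
  = (s_{n-1}⁻¹ ⋯ s_1⁻¹) (s_n ⋯ s_3 s_2⁻¹ s_3 ⋯ s_n) (s_{n-1}⁻¹ ⋯ s_1⁻¹)⁻¹`. -/
theorem statement13 (n : ℕ) (hn : 2 ≤ n) :
    let s : ℕ → BraidGroup n := fun k => σ ⟨(k - 1) % n, Nat.mod_lt _ (by omega)⟩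
    ((s n)⁻¹ * (descProd (fun k => (s k)⁻¹) 2 (n - 2) * s 1 *
        ascProd (fun k => (s k)⁻¹) 2 (n - 2)) * s n =
      descProd s 1 (n - 1) *
        (descProd (fun k => (s k)⁻¹) 3 (n - 2) * s 2 * ascProd (fun k => (s k)⁻¹) 3 (n - 2)) *
        (descProd s 1 (n - 1))⁻¹) ∧
    (s n * (descProd s 2 (n - 2) * (s 1)⁻¹ * ascProd s 2 (n - 2)) * (s n)⁻¹ =
      descProd (fun k => (s k)⁻¹) 1 (n - 1) *
        (descProd s 3 (n - 2) * (s 2)⁻¹ * ascProd s 3 (n - 2)) *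
        (descProd (fun k => (s k)⁻¹) 1 (n - 1))⁻¹) := by
  intro s
  refine statement13_aux s n hn ?_ ?_
  · intro i h1 h2
    exact σ_braid ⟨(i - 1) % n, Nat.mod_lt _ (by omega)⟩
      ⟨(i + 1 - 1) % n, Nat.mod_lt _ (by omega)⟩
      (by simp only [Nat.mod_eq_of_lt (show i - 1 < n by omega),
        Nat.mod_eq_of_lt (show i + 1 - 1 < n by omega)]; omega)
  · intro i j h1 h2 h3
    exact σ_comm ⟨(i - 1) % n, Nat.mod_lt _ (by omega)⟩
      ⟨(j - 1) % n, Nat.mod_lt _ (by omega)⟩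
      (by simp only [Nat.mod_eq_of_lt (show i - 1 < n by omega),
        Nat.mod_eq_of_lt (show j - 1 < n by omega)]; omega)

end Cubic
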